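/- If k = 2^{i+j} and s = 2^i (so k ≥ s), then the extremal s-range satisfies n_s(k) ≥ (1 + k/s)^s - 1. -/

import Mathlib

/-- `i` is a sum of at most `s` elements of `A` (with repetition). -/
def Reachable (A : Finset ℕ) (s i : ℕ) : Prop :=
  ∃ f : ℕ → ℕ, (∑ x ∈ A, f x) ≤ s ∧ (∑ x ∈ A, f x * x) = i

/-- The s-range of a stamp basis `A`. -/
noncomputable def srange (A : Finset ℕ) (s : ℕ) : ℕ :=
  sSup {n | ∀ i, 1 ≤ i → i ≤ n → Reachable A s i}

/-- The extremal s-range over bases of `k` distinct positive denominations. -/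
noncomputable def exrange (k s : ℕ) : ℕ :=
  sSup {n | ∃ A : Finset ℕ, A.card = k ∧ (∀ a ∈ A, 0 < a) ∧ n = srange A s}

/-- The stamp set `{ d * (m+1)^t : 1 ≤ d ≤ m, 0 ≤ t < s }`. -/
def stamps (m s : ℕ) : Finset ℕ :=
  (Finset.range m ×ˢ Finset.range s).image (fun p => (p.1 + 1) * (m + 1) ^ p.2)

lemma stamps_inj (m : ℕ) {d t d' t' : ℕ} (hd : d < m) (hd' : d' < m)
    (h : (d + 1) * (m + 1) ^ t = (d' + 1) * (m + 1) ^ t') : d = d' ∧ t = t' := by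
  have key : ∀ a b u v : ℕ, a < m → b < m → u ≤ v →
      (a + 1) * (m + 1) ^ u = (b + 1) * (m + 1) ^ v → u = v := by
    intro a b u v ha hb huv heq
    by_contra hne
    have h1 : u + 1 ≤ v := by omega
    have : (b + 1) * (m + 1) ^ v ≥ (m + 1) ^ (u + 1) := by
      calc (m + 1) ^ (u + 1) ≤ (m + 1) ^ v := Nat.pow_le_pow_right (by omega) h1
        _ ≤ (b + 1) * (m + 1) ^ v := Nat.le_mul_of_pos_left _ (by omega)
    have h2 : (a + 1) * (m + 1) ^ u < (m + 1) ^ (u + 1) := by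
      have hp : 0 < (m + 1) ^ u := pow_pos (by omega : 0 < m + 1) _
      rw [pow_succ, mul_comm ((m + 1) ^ u) (m + 1)]
      exact (Nat.mul_lt_mul_right hp).mpr (by omega)
    omega
  have htt : t = t' := by
    rcases le_total t t' with hle | hle
    · exact key d d' t t' hd hd' hle h
    · exact (key d' d t' t hd' hd hle h.symm).symm
  subst htt
  refine ⟨?_, rfl⟩
  have := Nat.eq_of_mul_eq_mul_right (pow_pos (by omega : 0 < m + 1) t) h
  omega

lemma stamps_card (m s : ℕ) : (stamps m s).card = m * s := by
  rw [stamps, Finset.card_image_of_injOn, Finset.card_product, Finset.card_range,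
    Finset.card_range]
  intro p hp q hq hpq
  simp only [Finset.mem_coe, Finset.mem_product, Finset.mem_range] at hp hq
  obtain ⟨h1, h2⟩ := stamps_inj m hp.1 hq.1 hpq
  exact Prod.ext h1 h2

lemma stamps_pos (m s : ℕ) : ∀ a ∈ stamps m s, 0 < a := by
  intro a ha
  simp only [stamps, Finset.mem_image, Finset.mem_product, Finset.mem_range] at ha
  obtain ⟨p, _, rfl⟩ := ha
  positivity

lemma mem_stamps (m s : ℕ) {d t : ℕ} (hd1 : 1 ≤ d) (hd : d ≤ m) (ht : t < s) :
    d * (m + 1) ^ t ∈ stamps m s := by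
  simp only [stamps, Finset.mem_image, Finset.mem_product, Finset.mem_range]
  exact ⟨(d - 1, t), ⟨by omega, ht⟩, by congr 1; omega⟩

/-- Every `n < (m+1)^t` is a sum of at most `t` stamps (for `t ≤ s`). -/
lemma stamps_reach (m s : ℕ) : ∀ t, t ≤ s → ∀ n, n < (m + 1) ^ t →
    ∃ f : ℕ → ℕ, (∑ x ∈ stamps m s, f x) ≤ t ∧ (∑ x ∈ stamps m s, f x * x) = n := by
  intro t
  induction t with
  | zero =>
    intro _ n hn
    rw [pow_zero] at hn
    have : n = 0 := by omega
    subst this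
    exact ⟨fun _ => 0, by simp, by simp⟩
  | succ t ih =>
    intro hts n hn
    have hbpos : 0 < (m + 1) ^ t := pow_pos (by omega : 0 < m + 1) _
    set q := n / (m + 1) ^ t with hq
    set r := n % (m + 1) ^ t with hr
    have hqm : q ≤ m := by
      have : q < m + 1 := by
        rw [hq, Nat.div_lt_iff_lt_mul hbpos]
        calc n < (m + 1) ^ (t + 1) := hn
          _ = (m + 1) * (m + 1) ^ t := by ring
      omega
    have hrlt : r < (m + 1) ^ t := Nat.mod_lt _ hbpos
    obtain ⟨f, hf1, hf2⟩ := ih (by omega) r hrlt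
    rcases Nat.eq_zero_or_pos q with hq0 | hq0
    · refine ⟨f, by omega, ?_⟩
      rw [hf2, hr]
      rw [hq] at hq0
      exact Nat.mod_eq_of_lt ((Nat.div_eq_zero_iff.mp hq0).resolve_left (by omega))
    · set e := q * (m + 1) ^ t with he
      have heA : e ∈ stamps m s := mem_stamps m s hq0 hqm (by omega)
      refine ⟨fun x => f x + (if x = e then 1 else 0), ?_, ?_⟩
      · rw [Finset.sum_add_distrib, Finset.sum_ite_eq' (stamps m s) e (fun _ => 1)]
        simp [heA]
        omega
      · have : (∑ x ∈ stamps m s, (f x + (if x = e then 1 else 0)) * x)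
            = (∑ x ∈ stamps m s, f x * x) + ∑ x ∈ stamps m s, (if x = e then x else 0) := by
          rw [← Finset.sum_add_distrib]
          congr 1; ext x; by_cases hx : x = e <;> simp [hx]; ring
        rw [this, hf2, Finset.sum_ite_eq' (stamps m s) e (fun x => x)]
        simp only [heA, if_true]
        rw [hr, he, hq]
        exact Nat.mod_add_div' n ((m + 1) ^ t)

/-- Uniform counting bound: a full initial segment reachable with `s` stamps from
`A` has length at most `(s+1)^A.card`. -/
lemma seg_le (A : Finset ℕ) (s n : ℕ)
    (h : ∀ i, 1 ≤ i → i ≤ n → Reachable A s i) : n ≤ (s + 1) ^ A.card := by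
  classical
  have key : (Finset.Icc 1 n).card ≤ (Finset.univ : Finset (A → Fin (s + 1))).card := by
    apply Finset.card_le_card_of_injOn
      (fun mm => if hm : Reachable A s mm then
        (fun a => ⟨min (hm.choose a) s, by omega⟩) else (fun _ => 0))
    · intro _ _; exact Finset.mem_univ _
    · intro a ha b hb hab
      simp only [Finset.mem_coe, Finset.mem_Icc] at ha hb
      have hra : Reachable A s a := h a ha.1 ha.2
      have hrb : Reachable A s b := h b hb.1 hb.2
      dsimp only at hab
      rw [dif_pos hra, dif_pos hrb] at hab
      have fa := hra.choose_spec
      have fb := hrb.choose_spec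
      have hval : ∀ x ∈ A, hra.choose x = hrb.choose x := by
        intro x hx
        have h1 : hra.choose x ≤ s :=
          le_trans (Finset.single_le_sum (fun i _ => Nat.zero_le _) hx) fa.1
        have h2 : hrb.choose x ≤ s :=
          le_trans (Finset.single_le_sum (fun i _ => Nat.zero_le _) hx) fb.1
        have := congrFun hab ⟨x, hx⟩
        simp only [Fin.mk.injEq] at this
        omega
      calc a = ∑ x ∈ A, hra.choose x * x := fa.2.symm
        _ = ∑ x ∈ A, hrb.choose x * x := Finset.sum_congr rfl (fun x hx => by rw [hval x hx])
        _ = b := fb.2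
  simpa [Fintype.card_fun, Fintype.card_coe, Nat.card_Icc] using key

theorem midpoint_lower_k_ge_s (i j k s : ℕ) (hk : k = 2 ^ (i + j)) (hs : s = 2 ^ i) :
    exrange k s ≥ (1 + k / s) ^ s - 1 := by
  classical
  have hks : k / s = 2 ^ j := by
    rw [hk, hs, pow_add, Nat.mul_div_cancel_left _ (pow_pos (by norm_num : (0:ℕ) < 2) _)]
  set m := 2 ^ j with hm
  set A := stamps m s with hA
  have hcard : A.card = k := by
    rw [hA, stamps_card, hm, hs, hk, pow_add, mul_comm]
  have hN : ∀ x, 1 ≤ x → x ≤ (m + 1) ^ s - 1 → Reachable A s x := by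
    intro x _ hx2
    have hpos : 0 < (m + 1) ^ s := pow_pos (Nat.succ_pos m) _
    have : x < (m + 1) ^ s := lt_of_le_of_lt hx2 (Nat.sub_lt hpos one_pos)
    obtain ⟨f, hf1, hf2⟩ := stamps_reach m s s le_rfl x this
    exact ⟨f, hf1, hf2⟩
  -- srange A s ≥ (m+1)^s - 1
  have hsr : (m + 1) ^ s - 1 ≤ srange A s := by
    apply le_csSup
    · exact ⟨(s + 1) ^ A.card, fun n hn => seg_le A s n hn⟩
    · exact hN
  -- exrange bound
  have hex : srange A s ≤ exrange k s := by
    apply le_csSup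
    · refine ⟨(s + 1) ^ k, ?_⟩
      rintro n ⟨B, hB1, _, rfl⟩
      have hne : {n | ∀ i, 1 ≤ i → i ≤ n → Reachable B s i}.Nonempty := by
        refine ⟨0, ?_⟩
        intro x h1 h2
        exact absurd (h1.trans h2) (by omega)
      apply csSup_le hne
      intro nn hnn
      rw [← hB1]
      exact seg_le B s nn hnn
    · exact ⟨A, hcard, stamps_pos m s, rfl⟩
  rw [hks]
  calc (1 + 2 ^ j) ^ s - 1 = (m + 1) ^ s - 1 := by rw [hm, add_comm]
    _ ≤ srange A s := hsr
    _ ≤ exrange k s := hex
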